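/- arXiv:2308.07004 — 5 statements merged into one kernel-verified Lean document; each statement's English description precedes it below -/
import Mathlib

section
/- Let X = {x₁,…,xₙ} be n distinct positive integers contained in [ℓ, 2ℓ]. Under the hypothesis that for every c·ℓ²/n ≤ t ≤ Σ(X)/2 there exists a subset-sum t' of X with 0 ≤ t' − t ≤ 8ℓ/n (density lemma), the following exchange holds: given any multiple-of-ε profit instance and parameter Δ with the setup of the Greedy Exchange Lemma, one can replace a high-index profit amount p* ∈ (B, B+2] by a subset R of low-index items with total profit p̃ satisfying 1/Δ ≤ p̃ − (1−ε)p* ≤ 9/Δ, and moreover p* − p̃ ≥ ε·p* − 9/Δ > 0 when p* > B = 9c·ε⁻¹/Δ. -/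
/-- Greedy-exchange ingredient. Profits pᵢ are multiples of ε in [1,2);
c ≥ 1 is a universal constant, Δ a parameter, B := 9c·ε⁻¹/Δ. Under the density hypothesis
(every target t with c·ε⁻¹/Δ ≤ t ≤ (Σ p)/2 is approximated from above within 8/Δ by a
subset sum of the low-index items I'), for any p* ∈ (B, B+2] there is a subset R of I'
with total profit p̃ satisfying 1/Δ ≤ p̃ − (1−ε)p* ≤ 9/Δ, and moreover
p* − p̃ ≥ ε·p* − 9/Δ > 0. -/
theorem greedy_exchange_replacement {ι : Type*} (ε Δ c : ℝ)
    (hε : 0 < ε) (hε2 : ε < 1 / 2) (hΔ : 0 < Δ) (hc : 1 ≤ c)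
    (I' : Finset ι) (p : ι → ℝ)
    (hp : ∀ i ∈ I', 1 ≤ p i ∧ p i < 2)
    (hmult : ∀ i ∈ I', ∃ m : ℕ, p i = (m : ℝ) * ε)
    (hdensity : ∀ t : ℝ, c * ε⁻¹ / Δ ≤ t → t ≤ (∑ i ∈ I', p i) / 2 →
      ∃ R : Finset ι, R ⊆ I' ∧ 0 ≤ (∑ i ∈ R, p i) - t ∧ (∑ i ∈ R, p i) - t ≤ 8 / Δ)
    (pstar : ℝ)
    (hB1 : 9 * c * ε⁻¹ / Δ < pstar) (hB2 : pstar ≤ 9 * c * ε⁻¹ / Δ + 2)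
    (hrange : (1 - ε) * pstar + 1 / Δ ≤ (∑ i ∈ I', p i) / 2) :
    ∃ R : Finset ι, R ⊆ I' ∧
      1 / Δ ≤ (∑ i ∈ R, p i) - (1 - ε) * pstar ∧
      (∑ i ∈ R, p i) - (1 - ε) * pstar ≤ 9 / Δ ∧
      ε * pstar - 9 / Δ ≤ pstar - (∑ i ∈ R, p i) ∧
      0 < ε * pstar - 9 / Δ := by
  have hεinv : 0 < ε⁻¹ := inv_pos.mpr hε
  have hc0 : 0 < c := lt_of_lt_of_le one_pos hc
  have hBpos : 0 < c * ε⁻¹ / Δ := by positivity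
  have h9B : 0 < 9 * c * ε⁻¹ / Δ := by positivity
  have hpp : 0 < pstar := lt_trans h9B hB1
  have hεp : 9 / Δ < ε * pstar := by
    have h2 : 9 / Δ ≤ ε * (9 * c * ε⁻¹ / Δ) := by
      have he : ε * (9 * c * ε⁻¹ / Δ) = 9 * c / Δ := by field_simp
      rw [he]
      have : (9:ℝ) ≤ 9 * c := by nlinarith
      have : 9/Δ ≤ 9*c/Δ := by gcongr
      linarith
    have h3 : ε * (9 * c * ε⁻¹ / Δ) < ε * pstar :=
      mul_lt_mul_of_pos_left hB1 hε
    linarith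
  have ht1 : c * ε⁻¹ / Δ ≤ (1 - ε) * pstar + 1 / Δ := by
    have key : (1/2) * (9 * c * ε⁻¹ / Δ) = (9/2) * (c * ε⁻¹ / Δ) := by ring
    have h12 : (0:ℝ) ≤ 1 - ε - 1/2 := by linarith
    have hprod : 0 ≤ (1 - ε - 1/2) * pstar := mul_nonneg h12 hpp.le
    have hd : (0:ℝ) ≤ 1 / Δ := by positivity
    nlinarith
  obtain ⟨R, hR, h0, h8⟩ := hdensity ((1 - ε) * pstar + 1 / Δ) ht1 hrange
  have h9 : (9:ℝ)/Δ = 8/Δ + 1/Δ := by ring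
  refine ⟨R, hR, by linarith, by linarith, by linarith, by linarith⟩
end

section
/- Suppose items have profits in [1,2] and are sorted in non-increasing order of unit profit pᵢ/wᵢ. Define the greedy step function f̃ with breakpoints at prefix weight sums W_k = w₁+⋯+w_k taking value P_k = p₁+⋯+p_k on [W_k, W_{k+1}). Then for all x in [0, W_n], f_I(x) − 2 ≤ f̃(x) ≤ f_I(x), i.e., the greedy prefix function approximates the knapsack profit function f_I with additive error at most max_i pᵢ ≤ 2. -/
/-- The knapsack profit function of a finite set of items:
`f_I(x) = max over J ⊆ I with Σ_{i∈J} wᵢ ≤ x of Σ_{i∈J} pᵢ`. -/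
noncomputable def knapProfit {ι : Type*} (I : Finset ι) (w p : ι → ℝ) (x : ℝ) : ℝ :=
  sSup {v | ∃ J : Finset ι, J ⊆ I ∧ (∑ i ∈ J, w i) ≤ x ∧ v = ∑ i ∈ J, p i}

/-- Items with profits in [1,2], sorted by non-increasing unit profit.
The greedy step function takes value P_k = p 0 + ⋯ + p (k-1) on [W_k, W_{k+1}) where
W_k = w 0 + ⋯ + w (k-1); it approximates f_I within additive error 2 from below:
for x ∈ [0, W_n], f_I(x) − 2 ≤ P_k ≤ f_I(x), k being the largest index with W_k ≤ x. -/
theorem greedy_prefix_approx (n : ℕ) (w p : ℕ → ℝ)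
    (hw : ∀ i < n, 0 < w i) (hp : ∀ i < n, 1 ≤ p i ∧ p i ≤ 2)
    (hsorted : ∀ i j, i ≤ j → j < n → p j / w j ≤ p i / w i)
    (x : ℝ) (hx : 0 ≤ x) (hxle : x ≤ ∑ i ∈ Finset.range n, w i)
    (k : ℕ) (hkn : k ≤ n)
    (hk1 : ∑ i ∈ Finset.range k, w i ≤ x)
    (hk2 : k < n → x < ∑ i ∈ Finset.range (k + 1), w i) :
    knapProfit (Finset.range n) w p x - 2 ≤ ∑ i ∈ Finset.range k, p i ∧
      ∑ i ∈ Finset.range k, p i ≤ knapProfit (Finset.range n) w p x := by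
  set K := Finset.range k with hK
  set S : Set ℝ :=
    {v | ∃ J : Finset ℕ, J ⊆ Finset.range n ∧ (∑ i ∈ J, w i) ≤ x ∧ v = ∑ i ∈ J, p i}
    with hS
  have hmem : (∑ i ∈ K, p i) ∈ S :=
    ⟨K, Finset.range_subset_range.mpr hkn, hk1, rfl⟩
  have hne : S.Nonempty := ⟨0, ∅, by simp, by simpa, by simp⟩
  have hbdd : ∀ v ∈ S, v ≤ (∑ i ∈ K, p i) + 2 := by
    rintro v ⟨J, hJ, hJw, rfl⟩
    rcases eq_or_lt_of_le hkn with hkeq | hklt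
    · subst hkeq
      have hle : ∑ i ∈ J, p i ≤ ∑ i ∈ K, p i := by
        apply Finset.sum_le_sum_of_subset_of_nonneg hJ
        intro i hi _
        exact le_trans zero_le_one (hp i (Finset.mem_range.mp hi)).1
      linarith
    · set r := p k / w k with hr
      have hwk := hw k hklt
      have hpk := hp k hklt
      have hrpos : 0 < r := div_pos (by linarith) hwk
      have h1 : ∑ i ∈ J \ K, p i ≤ r * ∑ i ∈ J \ K, w i := by
        rw [Finset.mul_sum]
        apply Finset.sum_le_sum
        intro i hi
        have hiJ := Finset.mem_sdiff.mp hi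
        have hin : i < n := Finset.mem_range.mp (hJ hiJ.1)
        have hki : k ≤ i := by
          by_contra h
          exact hiJ.2 (Finset.mem_range.mpr (by omega))
        have := hsorted k i hki hin
        rw [div_le_div_iff₀ (hw i hin) hwk] at this
        rw [hr, div_mul_eq_mul_div, le_div_iff₀ hwk]
        linarith [this]
      have h2 : r * ∑ i ∈ K \ J, w i ≤ ∑ i ∈ K \ J, p i := by
        rw [Finset.mul_sum]
        apply Finset.sum_le_sum
        intro i hi
        have hik : i < k := Finset.mem_range.mp (Finset.mem_sdiff.mp hi).1
        have hin : i < n := by omega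
        have := hsorted i k (by omega) hklt
        rw [div_le_div_iff₀ hwk (hw i hin)] at this
        rw [hr, div_mul_eq_mul_div, div_le_iff₀ hwk]
        linarith [this]
      have hJsplit : ∑ i ∈ J ∩ K, w i + ∑ i ∈ J \ K, w i = ∑ i ∈ J, w i :=
        Finset.sum_inter_add_sum_sdiff J K w
      have hKsplit : ∑ i ∈ K ∩ J, w i + ∑ i ∈ K \ J, w i = ∑ i ∈ K, w i :=
        Finset.sum_inter_add_sum_sdiff K J w
      have hJsplitp : ∑ i ∈ J ∩ K, p i + ∑ i ∈ J \ K, p i = ∑ i ∈ J, p i :=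
        Finset.sum_inter_add_sum_sdiff J K p
      have hKsplitp : ∑ i ∈ K ∩ J, p i + ∑ i ∈ K \ J, p i = ∑ i ∈ K, p i :=
        Finset.sum_inter_add_sum_sdiff K J p
      have hinter : J ∩ K = K ∩ J := Finset.inter_comm J K
      have hwx : x < ∑ i ∈ K, w i + w k := by
        have := hk2 hklt
        rwa [Finset.sum_range_succ] at this
      have hdiff : ∑ i ∈ J \ K, w i - ∑ i ∈ K \ J, w i < w k := by
        rw [hinter] at hJsplit
        linarith
      have hmul : r * (∑ i ∈ J \ K, w i - ∑ i ∈ K \ J, w i) ≤ r * w k :=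
        mul_le_mul_of_nonneg_left (le_of_lt hdiff) (le_of_lt hrpos)
      have hrwk : r * w k = p k := div_mul_cancel₀ _ (ne_of_gt hwk)
      rw [hinter] at hJsplitp
      nlinarith [hmul, h1, h2, hpk.2]
  have hBdd : BddAbove S := ⟨(∑ i ∈ K, p i) + 2, hbdd⟩
  constructor
  · have : knapProfit (Finset.range n) w p x ≤ (∑ i ∈ K, p i) + 2 :=
      csSup_le hne hbdd
    linarith
  · exact le_csSup hBdd hmem
end

section
/- If S' is a subset of a finite set S ⊆ ℝ obtained by repeatedly deleting elements v whenever there exist u < v < w in the current set with w ≤ u + Δ, until no such triple exists, then S' is a Δ-additive approximation of S: for every x ∈ S there exists x' ∈ S' with x − Δ ≤ x' ≤ x. -/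
/-- The sparsification process: `Sparsify Δ S S'` means S' is obtained from the finite set S
by repeatedly deleting an element v whenever there exist u < v < w in the current set with
w ≤ u + Δ. -/
inductive Sparsify (Δ : ℝ) : Finset ℝ → Finset ℝ → Prop
  | refl (S : Finset ℝ) : Sparsify Δ S S
  | step (S T : Finset ℝ) (u v w : ℝ) :
      Sparsify Δ S T → u ∈ T → v ∈ T → w ∈ T →
      u < v → v < w → w ≤ u + Δ → Sparsify Δ S (T.erase v)

/-- Any set S' obtained from S by the sparsification process is a Δ-additive
approximation of S: every x ∈ S has x' ∈ S' with x − Δ ≤ x' ≤ x. -/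
theorem sparsify_additive_approx (Δ : ℝ) (hΔ : 0 < Δ) (S S' : Finset ℝ)
    (h : Sparsify Δ S S') :
    ∀ x ∈ S, ∃ x' ∈ S', x - Δ ≤ x' ∧ x' ≤ x := by
  induction h with
  | refl => exact fun x hx => ⟨x, hx, by linarith, le_refl x⟩
  | step T' u v w _ hu hv hw huv hvw hwu ih =>
    intro x hx
    obtain ⟨x', hx', h1, h2⟩ := ih x hx
    by_cases hxv : x' = v
    · subst hxv
      by_cases hwx : w ≤ x
      · exact ⟨w, Finset.mem_erase.mpr ⟨ne_of_gt hvw, hw⟩, by linarith, hwx⟩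
      · exact ⟨u, Finset.mem_erase.mpr ⟨ne_of_lt huv, hu⟩, by linarith, by linarith⟩
    · exact ⟨x', Finset.mem_erase.mpr ⟨hxv, hx'⟩, h1, h2⟩
end

section
/- Let P be a monotone point set with no degenerate points, and let τ be its convex number (the number of maximal runs in the apex/base indicator sequence). Then P decomposes into τ blocks P = B[1] ∘ B[2] ∘ ⋯ ∘ B[τ], where consecutive blocks share an endpoint and each block is an upper convex hull or a lower convex hull. -/
open Pointwise

/-- A monotone point set: points p₀, …, p_{k−1} with nondecreasing coordinates and
x_{i+2} > x_i. -/
structure MPS where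
  k : ℕ
  pts : ℕ → ℝ × ℝ
  k_pos : 0 < k
  mono_x : ∀ i, i + 1 < k → (pts i).1 ≤ (pts (i + 1)).1
  mono_y : ∀ i, i + 1 < k → (pts i).2 ≤ (pts (i + 1)).2
  strict_x : ∀ i, i + 2 < k → (pts i).1 < (pts (i + 2)).1

/-- q lies on or below the segment from a to b. -/
def belowSeg (a b q : ℝ × ℝ) : Prop :=
  ∃ t : ℝ, 0 ≤ t ∧ t ≤ 1 ∧ q.1 = (1 - t) * a.1 + t * b.1 ∧ q.2 ≤ (1 - t) * a.2 + t * b.2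

/-- q lies on the segment from a to b. -/
def onSeg (a b q : ℝ × ℝ) : Prop :=
  ∃ t : ℝ, 0 ≤ t ∧ t ≤ 1 ∧ q.1 = (1 - t) * a.1 + t * b.1 ∧ q.2 = (1 - t) * a.2 + t * b.2

/-- q lies strictly above the line through a and b (a.1 < b.1 in our uses). -/
def strictlyAbove (a b q : ℝ × ℝ) : Prop :=
  (b.2 - a.2) * (q.1 - a.1) < (b.1 - a.1) * (q.2 - a.2)

/-- q lies strictly below the line through a and b. -/
def strictlyBelow (a b q : ℝ × ℝ) : Prop :=
  (b.1 - a.1) * (q.2 - a.2) < (b.2 - a.2) * (q.1 - a.1)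

/-- The region R(P): points with x in the x-range of P, 0 ≤ y, lying on or below the
polyline through the points of P. -/
def MPS.region (P : MPS) : Set (ℝ × ℝ) :=
  {q | 0 ≤ q.2 ∧ ((P.k = 1 ∧ q.1 = (P.pts 0).1 ∧ q.2 ≤ (P.pts 0).2) ∨
    ∃ i, i + 1 < P.k ∧ belowSeg (P.pts i) (P.pts (i + 1)) q)}

/-- The upper boundary of R(P). -/
def MPS.upperBoundary (P : MPS) : Set (ℝ × ℝ) :=
  {q | q ∈ P.region ∧ ∀ y : ℝ, q.2 < y → (q.1, y) ∉ P.region}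

/-- Point i of P is an apex: an endpoint, or strictly above the segment joining its
neighbours. -/
def MPS.IsApex (P : MPS) (i : ℕ) : Prop :=
  i < P.k ∧ (i = 0 ∨ i = P.k - 1 ∨
    strictlyAbove (P.pts (i - 1)) (P.pts (i + 1)) (P.pts i))

/-- Point i of P is a base: an interior point strictly below the segment joining its
neighbours. -/
def MPS.IsBase (P : MPS) (i : ℕ) : Prop :=
  0 < i ∧ i + 1 < P.k ∧ strictlyBelow (P.pts (i - 1)) (P.pts (i + 1)) (P.pts i)

/-- Point i of P is degenerate: an interior point lying on the segment joining its
neighbours. -/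
def MPS.IsDegenerate (P : MPS) (i : ℕ) : Prop :=
  0 < i ∧ i + 1 < P.k ∧ onSeg (P.pts (i - 1)) (P.pts (i + 1)) (P.pts i)

def MPS.NoDegenerate (P : MPS) : Prop := ∀ i, ¬ P.IsDegenerate i

/-- Left endpoint of the x-range of P. -/
def MPS.lo (P : MPS) : ℝ := (P.pts 0).1

/-- Right endpoint of the x-range of P. -/
def MPS.hi (P : MPS) : ℝ := (P.pts (P.k - 1)).1

/-- The upper-boundary function g[P]. -/
noncomputable def MPS.gFun (P : MPS) (x : ℝ) : ℝ := sSup {y | (x, y) ∈ P.region}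

/-- V is a minimal monotone point set for its region (this characterises V = P ⊕ Q
when region V = region P + region Q). -/
def MPS.Minimal (V : MPS) : Prop := ∀ W : MPS, W.region = V.region → V.k ≤ W.k

/-- The convex number of P: the number of maximal constant runs of the apex/base
indicator sequence. -/
noncomputable def MPS.convexNumber (P : MPS) : ℕ :=
  1 + Set.ncard {i : ℕ | i + 1 < P.k ∧ ¬ (P.IsApex (i + 1) ↔ P.IsApex i)}

private lemma mps_trichotomy (P : MPS) (hnd : P.NoDegenerate) (i : ℕ) (hi : 0 < i)
    (hik : i + 1 < P.k) :
    strictlyAbove (P.pts (i - 1)) (P.pts (i + 1)) (P.pts i) ∨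
    strictlyBelow (P.pts (i - 1)) (P.pts (i + 1)) (P.pts i) := by
  by_contra hcon
  push_neg at hcon
  obtain ⟨h1, h2⟩ := hcon
  set a := P.pts (i - 1) with ha
  set b := P.pts (i + 1) with hb
  set q := P.pts i with hq
  have h1' : ¬ ((b.2 - a.2) * (q.1 - a.1) < (b.1 - a.1) * (q.2 - a.2)) := h1
  have h2' : ¬ ((b.1 - a.1) * (q.2 - a.2) < (b.2 - a.2) * (q.1 - a.1)) := h2
  have heq : (b.1 - a.1) * (q.2 - a.2) = (b.2 - a.2) * (q.1 - a.1) :=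
    le_antisymm (not_lt.1 h1') (not_lt.1 h2')
  have hab : a.1 < b.1 := by
    have h3 := P.strict_x (i - 1) (by omega)
    have h4 : i - 1 + 2 = i + 1 := by omega
    rwa [h4] at h3
  have haq : a.1 ≤ q.1 := by
    have h3 := P.mono_x (i - 1) (by omega)
    have h4 : i - 1 + 1 = i := by omega
    rwa [h4] at h3
  have hqb : q.1 ≤ b.1 := P.mono_x i hik
  have hne : b.1 - a.1 ≠ 0 := by linarith
  set t : ℝ := (q.1 - a.1) / (b.1 - a.1) with ht0
  have ht : t * (b.1 - a.1) = q.1 - a.1 := div_mul_cancel₀ _ hne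
  apply hnd i
  refine ⟨hi, hik, t, ?_, ?_, ?_, ?_⟩
  · exact div_nonneg (by linarith) (by linarith)
  · rw [div_le_one (by linarith)]; linarith
  · linear_combination -ht
  · have h5 : (b.1 - a.1) * (q.2 - a.2) = (b.1 - a.1) * (t * (b.2 - a.2)) := by
      linear_combination heq - (b.2 - a.2) * ht
    have h6 : q.2 - a.2 = t * (b.2 - a.2) := mul_left_cancel₀ hne h5
    linear_combination h6

private lemma apex_above (P : MPS) {i : ℕ} (hi : 0 < i) (hik : i + 1 < P.k)
    (h : P.IsApex i) : strictlyAbove (P.pts (i - 1)) (P.pts (i + 1)) (P.pts i) := by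
  obtain ⟨hik', h0 | h0 | h0⟩ := h
  · omega
  · omega
  · exact h0

private lemma not_apex_below (P : MPS) (hnd : P.NoDegenerate) {i : ℕ} (hi : 0 < i)
    (hik : i + 1 < P.k) (h : ¬ P.IsApex i) :
    strictlyBelow (P.pts (i - 1)) (P.pts (i + 1)) (P.pts i) := by
  rcases mps_trichotomy P hnd i hi hik with h0 | h0
  · exact absurd ⟨by omega, Or.inr (Or.inr h0)⟩ h
  · exact h0

private lemma run_const (P : MPS) (a : ℕ) : ∀ b, a ≤ b →
    (∀ p, a ≤ p → p < b → (P.IsApex (p + 1) ↔ P.IsApex p)) →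
    (P.IsApex b ↔ P.IsApex a) := by
  intro b
  induction b with
  | zero =>
    intro hab _
    have h0 : a = 0 := by omega
    rw [h0]
  | succ n ih =>
    intro hab h
    rcases eq_or_lt_of_le hab with h0 | h0
    · rw [h0]
    · rw [h n (by omega) (by omega)]
      exact ih (by omega) (fun p hp hpn => h p hp (by omega))

/-- A monotone point set P with no degenerate points decomposes into
τ blocks (τ = convex number of P): there are indices 0 = e 0 ≤ e 1 ≤ ⋯ ≤ e τ = k − 1
(strictly increasing except possibly at the last step), consecutive blocks sharing an
endpoint, with each block [e j, e (j+1)] an upper convex hull (all interior points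
strictly above the segments joining their neighbours) or a lower convex hull. -/
theorem convex_decomposition (P : MPS) (hk : 2 ≤ P.k) (hnd : P.NoDegenerate) :
    ∃ e : ℕ → ℕ,
      e 0 = 0 ∧ e P.convexNumber = P.k - 1 ∧
      (∀ j, j < P.convexNumber → e j ≤ e (j + 1)) ∧
      (∀ j, j + 1 < P.convexNumber → e j < e (j + 1)) ∧
      (∀ j, j ≤ P.convexNumber → e j ≤ P.k - 1) ∧
      ∀ j, j < P.convexNumber →
        ((∀ i, e j < i → i < e (j + 1) →
            strictlyAbove (P.pts (i - 1)) (P.pts (i + 1)) (P.pts i)) ∨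
         (∀ i, e j < i → i < e (j + 1) →
            strictlyBelow (P.pts (i - 1)) (P.pts (i + 1)) (P.pts i))) := by
  classical
  set pr : ℕ → Prop := fun i => i + 1 < P.k ∧ ¬ (P.IsApex (i + 1) ↔ P.IsApex i) with hpr
  have hfin : (setOf pr).Finite :=
    (Set.finite_Iio P.k).subset (fun i hi => by
      simp only [Set.mem_Iio]; exact lt_of_lt_of_le (Nat.lt_succ_self i) (le_of_lt hi.1))
  set m : ℕ := hfin.toFinset.card with hm
  have hτ : P.convexNumber = m + 1 := by
    rw [MPS.convexNumber, show {i : ℕ | i + 1 < P.k ∧ ¬ (P.IsApex (i + 1) ↔ P.IsApex i)} = setOf pr from rfl,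
      Set.ncard_eq_toFinset_card _ hfin, Nat.add_comm]
  set f : ℕ → ℕ := Nat.nth pr with hf
  have hfmem : ∀ n, n < m → pr (f n) := fun n hn => Nat.nth_mem_of_lt_card hfin hn
  have hflt : ∀ n, n < m → f n + 1 < P.k := fun n hn => (hfmem n hn).1
  have hfmono : ∀ {n n'}, n < n' → n' < m → f n < f n' :=
    fun {n n'} h h' => Nat.nth_lt_nth_of_lt_card hfin h h'
  have hfle : ∀ {n n'}, n ≤ n' → n' < m → f n ≤ f n' :=
    fun {n n'} h h' => Nat.nth_le_nth_of_lt_card hfin h h'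
  have hsurj : ∀ p, pr p → ∃ n, n < m ∧ f n = p :=
    fun p hp => Nat.exists_lt_card_finite_nth_eq hfin hp
  set e : ℕ → ℕ := fun j =>
    if j = 0 then 0 else if j ≤ m then f (j - 1) + 1 else P.k - 1 with he
  have he0 : e 0 = 0 := rfl
  have heval : ∀ j, 0 < j → j ≤ m → e j = f (j - 1) + 1 := by
    intro j h1 h2; simp only [he]; rw [if_neg (by omega), if_pos h2]
  have hetop : ∀ j, m < j → e j = P.k - 1 := by
    intro j h1; simp only [he]; rw [if_neg (by omega), if_neg (by omega)]
  -- bound : e j ≤ P.k - 1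
  have hbound : ∀ j, e j ≤ P.k - 1 := by
    intro j
    rcases Nat.eq_zero_or_pos j with h0 | h0
    · rw [h0, he0]; omega
    rcases le_or_gt j m with h1 | h1
    · rw [heval j h0 h1]
      have := hflt (j - 1) (by omega)
      omega
    · rw [hetop j h1]
  -- monotone
  have hemono : ∀ j, j < P.convexNumber → e j ≤ e (j + 1) := by
    intro j hj
    rw [hτ] at hj
    rcases Nat.eq_zero_or_pos j with h0 | h0
    · rw [h0, he0]; omega
    rcases le_or_gt (j + 1) m with h1 | h1
    · rw [heval j h0 (by omega), heval (j + 1) (by omega) h1]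
      have := hfmono (show j - 1 < j + 1 - 1 by omega) (by omega)
      omega
    · rw [hetop (j + 1) h1]
      exact hbound j
  -- strict monotone
  have hestrict : ∀ j, j + 1 < P.convexNumber → e j < e (j + 1) := by
    intro j hj
    rw [hτ] at hj
    have h1 : j + 1 ≤ m := by omega
    rw [heval (j + 1) (by omega) h1]
    rcases Nat.eq_zero_or_pos j with h0 | h0
    · rw [h0, he0]; omega
    · rw [heval j h0 (by omega)]
      have := hfmono (show j - 1 < j + 1 - 1 by omega) (by omega)
      omega
  -- no switch strictly inside a block
  have hnoswitch : ∀ j p, e j < p → p + 1 < e (j + 1) →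
      (P.IsApex (p + 1) ↔ P.IsApex p) := by
    intro j p hp1 hp2
    by_contra hcon
    have hpk : p + 1 < P.k := by
      have := hbound (j + 1); omega
    obtain ⟨n, hn, hfn⟩ := hsurj p ⟨hpk, hcon⟩
    -- lower bound on n
    have hnlow : ∀ hj : 0 < j, j ≤ m → j - 1 < n := by
      intro hj hjm
      rw [heval j hj hjm] at hp1
      by_contra hle
      have := hfle (show n ≤ j - 1 by omega) (by omega)
      omega
    -- upper bound on n
    rcases le_or_gt (j + 1) m with h1 | h1
    · rw [heval (j + 1) (by omega) h1] at hp2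
      have hnup : n < j + 1 - 1 := by
        by_contra hle
        have := hfle (show j + 1 - 1 ≤ n by omega) hn
        omega
      rcases Nat.eq_zero_or_pos j with h0 | h0
      · omega
      · have := hnlow h0 (by omega); omega
    · -- j ≥ m : block is [e j, k-1]; but then e j = f(j-1)+1 forces j = m (else e j = k-1)
      rcases le_or_gt j m with h2 | h2
      · rcases Nat.eq_zero_or_pos j with h0 | h0
        · -- j = 0 and m < j + 1 = 1, so m = 0, no n < m
          omega
        · have := hnlow h0 h2; omega
      · rw [hetop j h2] at hp1
        have := hbound (j + 1); omega
  -- block constancy: apex status constant strictly inside block j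
  have hconst : ∀ j i, e j < i → i < e (j + 1) → (P.IsApex i ↔ P.IsApex (e j + 1)) := by
    intro j i hi1 hi2
    exact run_const P (e j + 1) i (by omega)
      (fun p hp1 hp2 => hnoswitch j p (by omega) (by omega))
  refine ⟨e, he0, ?_, hemono, hestrict, fun j _ => hbound j, ?_⟩
  · rw [hτ]; exact hetop (m + 1) (by omega)
  · intro j hj
    by_cases hap : P.IsApex (e j + 1)
    · left
      intro i hi1 hi2
      have hik : i + 1 < P.k := by have := hbound (j + 1); omega
      exact apex_above P (by omega) hik ((hconst j i hi1 hi2).2 hap)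
    · right
      intro i hi1 hi2
      have hik : i + 1 < P.k := by have := hbound (j + 1); omega
      exact not_apex_below P hnd (by omega) hik
        (fun h => hap ((hconst j i hi1 hi2).1 h))
end

section
/- Let φ : {0,…,X−1} → ℝ be convex in the sense that φ(y+1) − φ(y) is non-increasing in y, and let γ : {0,…,Y−1} → ℝ be arbitrary. Fix y. For candidates c_a < c_b (both valid indices), if φ(y − c_a) + γ(c_a) < φ(y − c_b) + γ(c_b), then for every y' ≥ y (with all indices valid), φ(y' − c_a) + γ(c_a) < φ(y' − c_b) + γ(c_b). -/
/-- Monotone domination for (min,+)-convolution with one convex argument.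
φ : {0,…,X−1} → ℝ is convex (non-increasing increments), γ : {0,…,Y−1} → ℝ arbitrary.
If candidate c_a < c_b satisfies φ(y−c_a)+γ(c_a) < φ(y−c_b)+γ(c_b), then for every
y' ≥ y with all indices valid, φ(y'−c_a)+γ(c_a) < φ(y'−c_b)+γ(c_b). -/
theorem convex_candidate_domination (X Y : ℕ) (φ γ : ℕ → ℝ)
    (hconv : ∀ y : ℕ, 1 ≤ y → y + 1 < X → φ (y + 1) - φ y ≤ φ y - φ (y - 1))
    (ca cb y y' : ℕ) (hcab : ca < cb) (hcbY : cb < Y) (hcby : cb ≤ y) (hyy' : y ≤ y')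
    (hvalid : y' - ca < X)
    (hlt : φ (y - ca) + γ ca < φ (y - cb) + γ cb) :
    φ (y' - ca) + γ ca < φ (y' - cb) + γ cb := by
  -- increments are non-increasing
  have inc : ∀ k l : ℕ, k ≤ l → l + 1 < X → φ (l + 1) - φ l ≤ φ (k + 1) - φ k := by
    intro k l hkl hlX
    induction l with
    | zero => interval_cases k; rfl
    | succ n ih =>
      rcases Nat.eq_or_lt_of_le hkl with h | h
      · rw [h]
      · have h1 : k ≤ n := Nat.lt_succ_iff.mp h
        have h2 : n + 1 < X := by omega
        calc φ (n + 1 + 1) - φ (n + 1) ≤ φ (n + 1) - φ ((n + 1) - 1) :=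
              hconv (n + 1) (by omega) hlX
          _ = φ (n + 1) - φ n := by simp
          _ ≤ φ (k + 1) - φ k := ih h1 h2
  have gap : ∀ d m n : ℕ, m ≤ n → n + d < X → φ (n + d) - φ n ≤ φ (m + d) - φ m := by
    intro d
    induction d with
    | zero => intro m n _ _; simp
    | succ e ih =>
      intro m n hmn hX
      have h1 : φ (n + e + 1) - φ (n + e) ≤ φ (m + e + 1) - φ (m + e) :=
        inc (m + e) (n + e) (by omega) (by omega)
      have h2 : φ (n + e) - φ n ≤ φ (m + e) - φ m := ih m n hmn (by omega)
      have e1 : n + (e + 1) = n + e + 1 := by omega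
      have e2 : m + (e + 1) = m + e + 1 := by omega
      rw [e1, e2]; linarith
  set d := cb - ca with hd
  have h1 : y - ca = (y - cb) + d := by omega
  have h2 : y' - ca = (y' - cb) + d := by omega
  have key : φ ((y' - cb) + d) - φ (y' - cb) ≤ φ ((y - cb) + d) - φ (y - cb) :=
    gap d (y - cb) (y' - cb) (by omega) (by omega)
  rw [h2]; rw [h1] at hlt; linarith
end
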